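/- Let U' ⊆ ℂⁿ and V' ⊆ ℂⁿ be connected open sets, let G and H be finite groups of biholomorphic automorphisms of U' and V' respectively, let Z be a topological space, and let φ : U' → Z and ψ : V' → Z be continuous proper maps with finite fibers such that φ ∘ g = φ for all g ∈ G and ψ ∘ h = ψ for all h ∈ H, the images U := φ(U') and V := ψ(V') are open, the induced maps U'/G → U and V'/H → V are homeomorphisms, and U ⊆ V. If λ, μ : U' → V' are two injections, i.e. injective holomorphic maps satisfying ψ ∘ λ = φ and ψ ∘ μ = φ, then there exists a unique h ∈ H such that h ∘ λ = μ. Moreover, for every g ∈ G there is a unique element λ(g) ∈ H with λ ∘ g = λ(g) ∘ λ, and the resulting map G → H, g ↦ λ(g), is an injective group homomorphism. -/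

import Mathlib

/-- The map `U'/G → Z` induced by a `G`-invariant map `φ : U' → Z`, where `U'/G` is the
quotient of the chart `U'` by the orbit relation of the local uniformizing group `G`. -/
def orbifoldChartQuotientMap {n : ℕ} {Z : Type} (U' : Set (Fin n → ℂ)) {G : Type} [Group G]
    (actG : G →* Equiv.Perm ↥U') (φ : (Fin n → ℂ) → Z)
    (hinv : ∀ (g : G) (x : ↥U'), φ (actG g x).val = φ x.val) :
    Quot (fun x y : ↥U' => ∃ g : G, actG g x = y) → Z :=
  Quot.lift (fun x : ↥U' => φ x.val) (by rintro a b ⟨g, rfl⟩; exact (hinv g a).symm)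

open Set Topology Filter

private lemma eq_at_closure_pt {X Y : Type*} [TopologicalSpace X] [TopologicalSpace Y] [T2Space Y]
    {f g : X → Y} {A : Set X} {y : X} (hf : ContinuousAt f y) (hg : ContinuousAt g y)
    (heq : Set.EqOn f g A) (hy : y ∈ closure A) : f y = g y := by
  haveI : (𝓝[A] y).NeBot := mem_closure_iff_nhdsWithin_neBot.mp hy
  have h1 : Filter.Tendsto f (𝓝[A] y) (𝓝 (f y)) := hf.continuousWithinAt
  have h2 : Filter.Tendsto g (𝓝[A] y) (𝓝 (g y)) := hg.continuousWithinAt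
  have h3 : Filter.Tendsto g (𝓝[A] y) (𝓝 (f y)) :=
    h1.congr' (Filter.eventually_of_mem self_mem_nhdsWithin fun x hx => heq hx)
  exact tendsto_nhds_unique h3 h2

private lemma eqOn_ball_of_eventuallyEq {n : ℕ} {f g : (Fin n → ℂ) → (Fin n → ℂ)}
    {s : Set (Fin n → ℂ)} (hf : DifferentiableOn ℂ f s) (hg : DifferentiableOn ℂ g s)
    {c : Fin n → ℂ} {r : ℝ} (hball : Metric.ball c r ⊆ s) {a : Fin n → ℂ}
    (ha : a ∈ Metric.ball c r) (heq : f =ᶠ[𝓝 a] g) :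
    Set.EqOn f g (Metric.ball c r) := by
  intro q hq
  set v : Fin n → ℂ := q - a with hv
  set L : ℂ → (Fin n → ℂ) := fun t => a + t • v with hL
  have hLdiff : Differentiable ℂ L := (differentiable_id.smul_const v).const_add a
  set T : Set ℂ := L ⁻¹' (Metric.ball c r) with hT
  have hTopen : IsOpen T := Metric.isOpen_ball.preimage hLdiff.continuous
  have hsmul1 : ∀ (b : ℝ) (t : ℂ), b • t = (b : ℂ) * t := fun b t => Complex.real_smul
  have hsmul2 : ∀ (b : ℝ) (w : Fin n → ℂ), b • w = (b : ℂ) • w := by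
    intro b w
    rw [← algebraMap_smul ℂ b w, Complex.coe_algebraMap]
  have hTconv : Convex ℝ T := by
    intro t₁ ht₁ t₂ ht₂ b₁ b₂ hb₁ hb₂ hb
    have hcomb : L (b₁ • t₁ + b₂ • t₂) = b₁ • L t₁ + b₂ • L t₂ := by
      simp only [hL, hsmul1, hsmul2]
      have hc : (b₁ : ℂ) + (b₂ : ℂ) = 1 := by exact_mod_cast hb
      have hc2 : (b₂ : ℂ) = 1 - (b₁ : ℂ) := by rw [← hc]; ring
      rw [hc2]
      module
    show L (b₁ • t₁ + b₂ • t₂) ∈ Metric.ball c r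
    rw [hcomb, hsmul2, hsmul2]
    have h₁ := hsmul2 b₁ (L t₁)
    have h₂ := hsmul2 b₂ (L t₂)
    rw [← h₁, ← h₂]
    exact (convex_ball c r) ht₁ ht₂ hb₁ hb₂ hb
  have hL0 : L 0 = a := by simp [hL]
  have hL1 : L 1 = q := by simp [hL, hv]
  have h0 : (0 : ℂ) ∈ T := by show L 0 ∈ Metric.ball c r; rw [hL0]; exact ha
  have h1 : (1 : ℂ) ∈ T := by show L 1 ∈ Metric.ball c r; rw [hL1]; exact hq
  have hmaps : Set.MapsTo L T s := fun t ht => hball ht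
  have hFa : AnalyticOnNhd ℂ (f ∘ L) T :=
    (hf.comp hLdiff.differentiableOn hmaps).analyticOnNhd hTopen
  have hGa : AnalyticOnNhd ℂ (g ∘ L) T :=
    (hg.comp hLdiff.differentiableOn hmaps).analyticOnNhd hTopen
  have htend : Filter.Tendsto L (𝓝 0) (𝓝 a) := by
    have h := hLdiff.continuous.tendsto (0 : ℂ)
    rwa [hL0] at h
  have hev : (f ∘ L) =ᶠ[𝓝 (0 : ℂ)] (g ∘ L) := heq.comp_tendsto htend
  have := hFa.eqOn_of_preconnected_of_eventuallyEq hGa hTconv.isPreconnected h0 hev h1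
  simpa [hL1] using this

private lemma identity_theorem {n : ℕ} {f g : (Fin n → ℂ) → (Fin n → ℂ)}
    {s : Set (Fin n → ℂ)} (hs : IsOpen s) (hc : IsPreconnected s)
    (hf : DifferentiableOn ℂ f s) (hg : DifferentiableOn ℂ g s)
    {O : Set (Fin n → ℂ)} (hO : IsOpen O) (hOne : O.Nonempty) (hOs : O ⊆ s)
    (heq : Set.EqOn f g O) : Set.EqOn f g s := by
  set A : Set (Fin n → ℂ) := {x | f =ᶠ[𝓝 x] g} with hA
  have hAopen : IsOpen A := isOpen_setOf_eventually_nhds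
  have hkey : ∀ x ∈ s, x ∈ closure A → x ∈ A := by
    intro x hx hxc
    obtain ⟨r, hrpos, hrs⟩ := Metric.isOpen_iff.mp hs x hx
    obtain ⟨w, hwball, hwA⟩ :=
      _root_.mem_closure_iff.mp hxc (Metric.ball x r) Metric.isOpen_ball
        (Metric.mem_ball_self hrpos)
    have heqball : Set.EqOn f g (Metric.ball x r) :=
      eqOn_ball_of_eventuallyEq hf hg hrs hwball hwA
    exact Filter.eventually_of_mem
      (Metric.isOpen_ball.mem_nhds (Metric.mem_ball_self hrpos)) heqball
  have hAne : (s ∩ A).Nonempty := by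
    obtain ⟨a, haO⟩ := hOne
    exact ⟨a, hOs haO, Filter.eventually_of_mem (hO.mem_nhds haO) heq⟩
  have hBopen : IsOpen (closure A)ᶜ := isClosed_closure.isOpen_compl
  have hsub : s ⊆ A ∪ (closure A)ᶜ := by
    intro x hx
    by_cases hxc : x ∈ closure A
    · exact Or.inl (hkey x hx hxc)
    · exact Or.inr hxc
  have hcompl : s ∩ (closure A)ᶜ = ∅ := by
    by_contra hne
    obtain ⟨w, hw⟩ := hc A (closure A)ᶜ hAopen hBopen hsub hAne
      (Set.nonempty_iff_ne_empty.mpr hne)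
    exact hw.2.2 (subset_closure hw.2.1)
  intro y hy
  have hyA : y ∈ A := by
    rcases hsub hy with h | h
    · exact h
    · exact absurd (Set.mem_inter hy h) (by rw [hcompl]; exact Set.notMem_empty y)
  exact hyA.self_of_nhds

private lemma baire_cover {n : ℕ} {ι : Type} [Countable ι] {S : Set (Fin n → ℂ)}
    (hS : IsOpen S) (hne : S.Nonempty) {T : ι → Set (Fin n → ℂ)} (hcov : S ⊆ ⋃ i, T i) :
    ∃ i, ∃ O : Set (Fin n → ℂ), IsOpen O ∧ O.Nonempty ∧ O ⊆ S ∧ O ⊆ closure (T i) := by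
  haveI : LocallyCompactSpace ↥S := hS.locallyCompactSpace
  haveI : Nonempty ↥S := hne.to_subtype
  have hclosed : ∀ i, IsClosed ((Subtype.val : ↥S → _) ⁻¹' closure (T i)) :=
    fun i => isClosed_closure.preimage continuous_subtype_val
  have hunion : ⋃ i, (Subtype.val : ↥S → _) ⁻¹' closure (T i) = Set.univ := by
    apply Set.eq_univ_of_forall
    intro x
    obtain ⟨i, hi⟩ := Set.mem_iUnion.mp (hcov x.2)
    exact Set.mem_iUnion.mpr ⟨i, subset_closure hi⟩
  obtain ⟨i, p, hp⟩ := nonempty_interior_of_iUnion_of_closed hclosed hunion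
  refine ⟨i, Subtype.val '' interior ((Subtype.val : ↥S → _) ⁻¹' closure (T i)),
    hS.isOpenEmbedding_subtypeVal.isOpenMap _ isOpen_interior,
    ⟨p.val, ⟨p, hp, rfl⟩⟩, ?_, ?_⟩
  · rintro _ ⟨q, _, rfl⟩; exact q.2
  · rintro _ ⟨q, hq, rfl⟩
    have h5 : q ∈ (Subtype.val : ↥S → _) ⁻¹' closure (T i) := interior_subset hq
    exact h5

private lemma exists_act_of_eq {n : ℕ} {Z : Type} (V' : Set (Fin n → ℂ)) {H : Type} [Group H]
    (act : H →* Equiv.Perm ↥V') (ψ : (Fin n → ℂ) → Z)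
    (hinv : ∀ (h : H) (x : ↥V'), ψ (act h x).val = ψ x.val)
    (hq : Function.Injective (orbifoldChartQuotientMap V' act ψ hinv))
    {x y : ↥V'} (hxy : ψ x.val = ψ y.val) : ∃ h : H, act h x = y := by
  have hEquiv : Equivalence (fun a b : ↥V' => ∃ g : H, act g a = b) := by
    constructor
    · exact fun a => ⟨1, by rw [map_one]; rfl⟩
    · rintro a b ⟨g, rfl⟩
      exact ⟨g⁻¹, by rw [map_inv]; exact Equiv.symm_apply_apply _ _⟩
    · rintro a b c ⟨g₁, rfl⟩ ⟨g₂, rfl⟩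
      exact ⟨g₂ * g₁, by rw [map_mul, Equiv.Perm.mul_apply]⟩
  have h1 : Quot.mk (fun a b : ↥V' => ∃ g : H, act g a = b) x
      = Quot.mk (fun a b : ↥V' => ∃ g : H, act g a = b) y := hq hxy
  exact hEquiv.eqvGen_iff.mp (Quot.eqvGen_exact h1)

private lemma master_lemma {n : ℕ} {Z : Type} [TopologicalSpace Z]
    {U' V' : Set (Fin n → ℂ)}
    (hU'open : IsOpen U') (hU'conn : IsConnected U')
    (hV'open : IsOpen V') (hV'conn : IsConnected V')
    {H : Type} [Group H] [Finite H]
    (actH : H →* Equiv.Perm ↥V') (hHfaithful : Function.Injective actH)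
    (hHhol : ∀ h : H, ∃ F : (Fin n → ℂ) → (Fin n → ℂ),
      DifferentiableOn ℂ F V' ∧ ∀ x : ↥V', F x.val = (actH h x).val)
    {φ ψ : (Fin n → ℂ) → Z}
    (hψcont : ContinuousOn ψ V')
    (hψinv : ∀ (h : H) (x : ↥V'), ψ (actH h x).val = ψ x.val)
    (hUopen : IsOpen (φ '' U'))
    (hψq : Function.Injective (orbifoldChartQuotientMap V' actH ψ hψinv))
    {lam mu : (Fin n → ℂ) → (Fin n → ℂ)}
    (hlamMaps : Set.MapsTo lam U' V') (hmuMaps : Set.MapsTo mu U' V')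
    (hlamHol : DifferentiableOn ℂ lam U') (hmuHol : DifferentiableOn ℂ mu U')
    (hlamComp : ∀ x ∈ U', ψ (lam x) = φ x) (hmuComp : ∀ x ∈ U', ψ (mu x) = φ x) :
    ∃! h : H, ∀ (x : Fin n → ℂ) (hx : x ∈ U'),
      (actH h ⟨lam x, hlamMaps hx⟩).val = mu x := by
  classical
  have hU'ne : U'.Nonempty := hU'conn.nonempty
  -- extensions of the group elements
  set FH : H → (Fin n → ℂ) → (Fin n → ℂ) := fun h => (hHhol h).choose with hFH
  have hFH1 : ∀ h : H, DifferentiableOn ℂ (FH h) V' := fun h => (hHhol h).choose_spec.1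
  have hFH2 : ∀ (h : H) (x : ↥V'), FH h x.val = (actH h x).val :=
    fun h => (hHhol h).choose_spec.2
  -- uniqueness core: an element fixing the image of `lam` pointwise is trivial
  have hfix : ∀ k : H,
      (∀ (x : Fin n → ℂ) (hx : x ∈ U'),
        actH k ⟨lam x, hlamMaps hx⟩ = ⟨lam x, hlamMaps hx⟩) → k = 1 := by
    intro k hk
    -- the open set W
    have hWopen : IsOpen (V' ∩ ψ ⁻¹' (φ '' U')) :=
      hψcont.isOpen_inter_preimage hV'open hUopen
    have hWne : (V' ∩ ψ ⁻¹' (φ '' U')).Nonempty := by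
      obtain ⟨x₀, hx₀⟩ := hU'ne
      exact ⟨lam x₀, hlamMaps hx₀, ⟨x₀, hx₀, (hlamComp x₀ hx₀).symm⟩⟩
    -- W is covered by the sets FH h '' (lam '' U')
    have hWcov : (V' ∩ ψ ⁻¹' (φ '' U')) ⊆
        ⋃ h : H, (fun x => FH h (lam x)) '' U' := by
      rintro y ⟨hyV, x, hxU, hfx⟩
      have h1 : ψ (lam x) = ψ y := by rw [hlamComp x hxU, hfx]
      obtain ⟨h, hh⟩ := exists_act_of_eq V' actH ψ hψinv hψq
        (x := ⟨lam x, hlamMaps hxU⟩) (y := ⟨y, hyV⟩) h1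
      refine Set.mem_iUnion.mpr ⟨h, x, hxU, ?_⟩
      show FH h (lam x) = y
      rw [hFH2 h ⟨lam x, hlamMaps hxU⟩, hh]
    obtain ⟨h, O, hOopen, hOne, hOW, hOcl⟩ := baire_cover hWopen hWne hWcov
    set k' : H := h * k * h⁻¹ with hk'
    -- FH k' equals the identity on the image set
    have heqT : Set.EqOn (FH k') id ((fun x => FH h (lam x)) '' U') := by
      rintro _ ⟨x, hxU, rfl⟩
      have hmem : FH h (lam x) = (actH h ⟨lam x, hlamMaps hxU⟩).val :=
        hFH2 h ⟨lam x, hlamMaps hxU⟩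
      have hmemV : FH h (lam x) ∈ V' := by
        rw [hmem]; exact (actH h ⟨lam x, hlamMaps hxU⟩).2
      have hsub : (⟨FH h (lam x), hmemV⟩ : ↥V') = actH h ⟨lam x, hlamMaps hxU⟩ :=
        Subtype.ext hmem
      have hact : actH k' ⟨FH h (lam x), hmemV⟩ = ⟨FH h (lam x), hmemV⟩ := by
        rw [hsub]
        have : k' * h = h * k := by rw [hk']; group
        rw [← Equiv.Perm.mul_apply, ← map_mul, this, map_mul, Equiv.Perm.mul_apply,
          hk x hxU]
      have := hFH2 k' ⟨FH h (lam x), hmemV⟩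
      show FH k' (FH h (lam x)) = id (FH h (lam x))
      rw [this, hact]
      rfl
    -- hence on O by continuity, then everywhere by the identity theorem
    have heqO : Set.EqOn (FH k') id O := by
      intro y hy
      have hyV : y ∈ V' := (hOW hy).1
      exact eq_at_closure_pt
        ((hFH1 k').continuousOn.continuousAt (hV'open.mem_nhds hyV))
        continuousAt_id heqT (hOcl hy)
    have heqV : Set.EqOn (FH k') id V' :=
      identity_theorem hV'open hV'conn.isPreconnected (hFH1 k')
        differentiable_id.differentiableOn hOopen hOne
        (fun y hy => (hOW hy).1) heqO
    have hk'1 : actH k' = 1 := by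
      apply Equiv.ext
      intro v
      apply Subtype.ext
      have := hFH2 k' v
      rw [← this, heqV v.2]
      rfl
    have : k' = 1 := hHfaithful (by rw [hk'1, map_one])
    have hkk : h * k * h⁻¹ = 1 := this
    calc k = h⁻¹ * (h * k * h⁻¹) * h := by group
    _ = 1 := by rw [hkk]; group
  -- existence
  have A : ∀ x ∈ U', ∃ h : H, FH h (lam x) = mu x := by
    intro x hx
    have h1 : ψ (lam x) = ψ (mu x) := by rw [hlamComp x hx, hmuComp x hx]
    obtain ⟨h, hh⟩ := exists_act_of_eq V' actH ψ hψinv hψq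
      (x := ⟨lam x, hlamMaps hx⟩) (y := ⟨mu x, hmuMaps hx⟩) h1
    exact ⟨h, by rw [hFH2 h ⟨lam x, hlamMaps hx⟩, hh]⟩
  have hcov : U' ⊆ ⋃ h : H, {x ∈ U' | FH h (lam x) = mu x} := by
    intro x hx
    obtain ⟨h, hh⟩ := A x hx
    exact Set.mem_iUnion.mpr ⟨h, hx, hh⟩
  obtain ⟨h, O, hOopen, hOne, hOU, hOcl⟩ := baire_cover hU'open hU'ne hcov
  have hdiff : DifferentiableOn ℂ (fun x => FH h (lam x)) U' := by
    have := (hFH1 h).comp hlamHol hlamMaps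
    exact this
  have heqO : Set.EqOn (fun x => FH h (lam x)) mu O := by
    intro y hy
    exact eq_at_closure_pt
      (hdiff.continuousOn.continuousAt (hU'open.mem_nhds (hOU hy)))
      (hmuHol.continuousOn.continuousAt (hU'open.mem_nhds (hOU hy)))
      (fun x hx => hx.2) (hOcl hy)
  have heqU : Set.EqOn (fun x => FH h (lam x)) mu U' :=
    identity_theorem hU'open hU'conn.isPreconnected hdiff hmuHol hOopen hOne hOU heqO
  refine ⟨h, ?_, ?_⟩
  · intro x hx
    rw [← hFH2 h ⟨lam x, hlamMaps hx⟩]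
    exact heqU hx
  · intro h' hh'
    have hone : h⁻¹ * h' = 1 := by
      apply hfix
      intro x hx
      have e1 : (actH h' ⟨lam x, hlamMaps hx⟩).val = mu x := hh' x hx
      have e2 : (actH h ⟨lam x, hlamMaps hx⟩).val = mu x := by
        rw [← hFH2 h ⟨lam x, hlamMaps hx⟩]; exact heqU hx
      have e3 : actH h' ⟨lam x, hlamMaps hx⟩ = actH h ⟨lam x, hlamMaps hx⟩ :=
        Subtype.ext (by rw [e1, e2])
      rw [map_mul, map_inv, Equiv.Perm.mul_apply, e3]
      exact Equiv.symm_apply_apply _ _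
    calc h' = h * (h⁻¹ * h') := by group
    _ = h := by rw [hone]; group

/-- Injections between orbifold charts: given two orbifold charts `(U', G, φ, U)` and
`(V', H, ψ, V)` (with `U'`, `V'` connected open subsets of `ℂⁿ`, `G`, `H` finite groups
acting faithfully and biholomorphically, `φ`, `ψ` continuous proper invariant maps with
finite fibers, open images, inducing homeomorphisms from the quotients), with `U ⊆ V`,
and two injections `λ, μ : U' → V'` (injective holomorphic maps with `ψ ∘ λ = φ` and
`ψ ∘ μ = φ`), there is a unique `h ∈ H` with `h ∘ λ = μ`; moreover for every `g ∈ G`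
there is a unique `λ(g) ∈ H` with `λ ∘ g = λ(g) ∘ λ`, and `g ↦ λ(g)` is an injective
group homomorphism `G → H`. -/
theorem orbifold_chart_injection_lemma
    (n : ℕ) (Z : Type) [TopologicalSpace Z]
    (U' V' : Set (Fin n → ℂ))
    (hU'open : IsOpen U') (hU'conn : IsConnected U')
    (hV'open : IsOpen V') (hV'conn : IsConnected V')
    (G H : Type) [Group G] [Finite G] [Group H] [Finite H]
    (actG : G →* Equiv.Perm ↥U') (actH : H →* Equiv.Perm ↥V')
    (hGfaithful : Function.Injective actG) (hHfaithful : Function.Injective actH)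
    (hGhol : ∀ g : G, ∃ F : (Fin n → ℂ) → (Fin n → ℂ),
      DifferentiableOn ℂ F U' ∧ ∀ x : ↥U', F x.val = (actG g x).val)
    (hHhol : ∀ h : H, ∃ F : (Fin n → ℂ) → (Fin n → ℂ),
      DifferentiableOn ℂ F V' ∧ ∀ x : ↥V', F x.val = (actH h x).val)
    (φ ψ : (Fin n → ℂ) → Z)
    (hφproper : IsProperMap (fun x : ↥U' => φ x.val))
    (hψproper : IsProperMap (fun x : ↥V' => ψ x.val))
    (hφfin : ∀ z : Z, (U' ∩ φ ⁻¹' {z}).Finite)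
    (hψfin : ∀ z : Z, (V' ∩ ψ ⁻¹' {z}).Finite)
    (hφinv : ∀ (g : G) (x : ↥U'), φ (actG g x).val = φ x.val)
    (hψinv : ∀ (h : H) (x : ↥V'), ψ (actH h x).val = ψ x.val)
    (hUopen : IsOpen (φ '' U')) (hVopen : IsOpen (ψ '' V'))
    (hφquot : Topology.IsEmbedding (orbifoldChartQuotientMap U' actG φ hφinv))
    (hψquot : Topology.IsEmbedding (orbifoldChartQuotientMap V' actH ψ hψinv))
    (hUV : φ '' U' ⊆ ψ '' V')
    (lam mu : (Fin n → ℂ) → (Fin n → ℂ))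
    (hlamMaps : Set.MapsTo lam U' V') (hmuMaps : Set.MapsTo mu U' V')
    (hlamInj : Set.InjOn lam U') (hmuInj : Set.InjOn mu U')
    (hlamHol : DifferentiableOn ℂ lam U') (hmuHol : DifferentiableOn ℂ mu U')
    (hlamComp : ∀ x ∈ U', ψ (lam x) = φ x) (hmuComp : ∀ x ∈ U', ψ (mu x) = φ x) :
    (∃! h : H, ∀ (x : Fin n → ℂ) (hx : x ∈ U'),
        (actH h ⟨lam x, hlamMaps hx⟩).val = mu x) ∧
    (∀ g : G, ∃! h : H, ∀ (x : Fin n → ℂ) (hx : x ∈ U'),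
        lam (actG g ⟨x, hx⟩).val = (actH h ⟨lam x, hlamMaps hx⟩).val) ∧
    (∃ Λ : G →* H, Function.Injective Λ ∧
      ∀ (g : G) (x : Fin n → ℂ) (hx : x ∈ U'),
        lam (actG g ⟨x, hx⟩).val = (actH (Λ g) ⟨lam x, hlamMaps hx⟩).val) := by
  classical
  have hψcont : ContinuousOn ψ V' :=
    continuousOn_iff_continuous_restrict.mpr hψproper.continuous
  have hψq : Function.Injective (orbifoldChartQuotientMap V' actH ψ hψinv) :=
    hψquot.injective
  have part1 := master_lemma hU'open hU'conn hV'open hV'conn actH hHfaithful hHhol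
    hψcont hψinv hUopen hψq hlamMaps hmuMaps hlamHol hmuHol hlamComp hmuComp
  set FG : G → (Fin n → ℂ) → (Fin n → ℂ) := fun g => (hGhol g).choose with hFGdef
  have hFG1 : ∀ g, DifferentiableOn ℂ (FG g) U' := fun g => (hGhol g).choose_spec.1
  have hFG2 : ∀ (g : G) (x : ↥U'), FG g x.val = (actG g x).val :=
    fun g => (hGhol g).choose_spec.2
  have hFGmaps : ∀ g, Set.MapsTo (FG g) U' U' := by
    intro g x hx
    have := hFG2 g ⟨x, hx⟩
    rw [this]
    exact (actG g ⟨x, hx⟩).2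
  have part2 : ∀ g : G, ∃! h : H, ∀ (x : Fin n → ℂ) (hx : x ∈ U'),
      lam (actG g ⟨x, hx⟩).val = (actH h ⟨lam x, hlamMaps hx⟩).val := by
    intro g
    have hmuMaps' : Set.MapsTo (fun x => lam (FG g x)) U' V' :=
      fun x hx => hlamMaps (hFGmaps g hx)
    have hmuHol' : DifferentiableOn ℂ (fun x => lam (FG g x)) U' :=
      hlamHol.comp (hFG1 g) (hFGmaps g)
    have hmuComp' : ∀ x ∈ U', ψ (lam (FG g x)) = φ x := by
      intro x hx
      rw [hlamComp _ (hFGmaps g hx), hFG2 g ⟨x, hx⟩, hφinv g ⟨x, hx⟩]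
    obtain ⟨h, hh, hu⟩ := master_lemma hU'open hU'conn hV'open hV'conn actH hHfaithful
      hHhol hψcont hψinv hUopen hψq hlamMaps hmuMaps' hlamHol hmuHol' hlamComp hmuComp'
    refine ⟨h, ?_, ?_⟩
    · intro x hx
      rw [← hFG2 g ⟨x, hx⟩]
      exact (hh x hx).symm
    · intro h' hh'
      apply hu
      intro x hx
      show (actH h' ⟨lam x, hlamMaps hx⟩).val = lam (FG g x)
      rw [hFG2 g ⟨x, hx⟩]
      exact (hh' x hx).symm
  have hspec : ∀ (g : G) (x : Fin n → ℂ) (hx : x ∈ U'),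
      lam (actG g ⟨x, hx⟩).val = (actH ((part2 g).choose) ⟨lam x, hlamMaps hx⟩).val :=
    fun g => (part2 g).choose_spec.1
  have huniq : ∀ (g : G) (h' : H),
      (∀ (x : Fin n → ℂ) (hx : x ∈ U'),
        lam (actG g ⟨x, hx⟩).val = (actH h' ⟨lam x, hlamMaps hx⟩).val) →
      h' = (part2 g).choose := fun g => (part2 g).choose_spec.2
  have hmul : ∀ g₁ g₂ : G,
      (part2 (g₁ * g₂)).choose = (part2 g₁).choose * (part2 g₂).choose := by
    intro g₁ g₂
    refine (huniq (g₁ * g₂) _ ?_).symm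
    intro x hx
    have hy : (actG g₂ ⟨x, hx⟩).val ∈ U' := (actG g₂ ⟨x, hx⟩).2
    have e2 := hspec g₂ x hx
    have e1 := hspec g₁ (actG g₂ ⟨x, hx⟩).val hy
    have hsub : (⟨lam (actG g₂ ⟨x, hx⟩).val, hlamMaps hy⟩ : ↥V')
        = actH ((part2 g₂).choose) ⟨lam x, hlamMaps hx⟩ := Subtype.ext e2
    calc lam (actG (g₁ * g₂) ⟨x, hx⟩).val
        = lam (actG g₁ (actG g₂ ⟨x, hx⟩)).val := by rw [map_mul, Equiv.Perm.mul_apply]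
      _ = (actH ((part2 g₁).choose)
            ⟨lam (actG g₂ ⟨x, hx⟩).val, hlamMaps hy⟩).val := e1
      _ = (actH ((part2 g₁).choose)
            (actH ((part2 g₂).choose) ⟨lam x, hlamMaps hx⟩)).val := by rw [hsub]
      _ = (actH ((part2 g₁).choose * (part2 g₂).choose) ⟨lam x, hlamMaps hx⟩).val := by
            rw [map_mul, Equiv.Perm.mul_apply]
  set Λ : G →* H := MonoidHom.mk' (fun g => (part2 g).choose) hmul with hΛ
  refine ⟨part1, part2, Λ, (injective_iff_map_eq_one Λ).mpr ?_, fun g x hx => hspec g x hx⟩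
  intro g hg1
  have hg1' : (part2 g).choose = 1 := hg1
  have hfixlam : ∀ (x : Fin n → ℂ) (hx : x ∈ U'), lam (actG g ⟨x, hx⟩).val = lam x := by
    intro x hx
    have h2 := hspec g x hx
    rw [hg1', map_one] at h2
    simpa using h2
  have hact1 : actG g = 1 := by
    apply Equiv.ext
    intro y
    apply Subtype.ext
    exact hlamInj (actG g y).2 y.2 (hfixlam y.val y.2)
  exact hGfaithful (by rw [hact1, map_one])
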